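/- Let z ∈ ℂ ∖ {0} and let k₁, k₂ ∈ ℂ satisfy P(k₁, z) = P(k₂, z) = 0 and k₁² ≠ k₂². Set c_j := −i·((1/2)k_j² + 17/8)/z for j = 1, 2, and define the ℂ²-valued functions Ψ_j(r) := (e^{i k_j r}, c_j·e^{i k_j r})ᵗ and Ψ̃_j(r) := (e^{−i k_j r}, c_j·e^{−i k_j r})ᵗ for r ∈ ℝ. Then for every r ∈ ℝ: W(Ψ₁, Ψ̃₂)(r) = 0, W(Ψ₂, Ψ̃₁)(r) = 0, W(Ψ₁, Ψ̃₁)(r) = −2i·k₁·(1 − c₁²), and W(Ψ₂, Ψ̃₂)(r) = −2i·k₂·(1 − c₂²). -/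

import Mathlib

/-- The quartic `P(k,z) = (1/4)k⁴ + (9/8)k² + 17/64 − z²`. -/
noncomputable def Pquart (k z : ℂ) : ℂ := (1/4) * k ^ 4 + (9/8) * k ^ 2 + 17/64 - z ^ 2

/-- The coefficient `c(k,z) = −i((1/2)k² + 17/8)/z`. -/
noncomputable def cCoef (k z : ℂ) : ℂ := -Complex.I * ((1/2) * k ^ 2 + 17/8) / z

/-- `Ψ(r) = (e^{ikr}, c·e^{ikr})ᵗ`. -/
noncomputable def PsiP (k c : ℂ) (r : ℝ) : ℂ × ℂ :=
  (Complex.exp (Complex.I * k * r), c * Complex.exp (Complex.I * k * r))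

/-- `Ψ̃(r) = (e^{−ikr}, c·e^{−ikr})ᵗ`. -/
noncomputable def PsiM (k c : ℂ) (r : ℝ) : ℂ × ℂ :=
  (Complex.exp (-(Complex.I * k * r)), c * Complex.exp (-(Complex.I * k * r)))

/-- The `σ₃`-Wronskian `W(f,g)(r) = f(r)ᵗσ₃g'(r) − f'(r)ᵗσ₃g(r)` for
`ℂ²`-valued functions written as pairs. -/
noncomputable def Wr (f g : ℝ → ℂ × ℂ) (r : ℝ) : ℂ :=
  ((f r).1 * deriv (fun t => (g t).1) r - (f r).2 * deriv (fun t => (g t).2) r) -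
    (deriv (fun t => (f t).1) r * (g r).1 - deriv (fun t => (f t).2) r * (g r).2)

lemma dexp (a : ℂ) (r : ℝ) :
    deriv (fun t : ℝ => Complex.exp (a * t)) r = a * Complex.exp (a * r) := by
  have h1 : HasDerivAt (fun t : ℝ => (t : ℂ)) 1 r := by
    simpa using (hasDerivAt_id r).ofReal_comp
  have h2 : HasDerivAt (fun t : ℝ => a * (t : ℂ)) a r := by
    simpa using h1.const_mul a
  simpa [mul_comm] using h2.cexp.deriv

lemma dexpc (c a : ℂ) (r : ℝ) :
    deriv (fun t : ℝ => c * Complex.exp (a * t)) r = c * (a * Complex.exp (a * r)) := by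
  rw [deriv_const_mul, dexp]
  exact ((Complex.ofRealCLM.hasDerivAt (x := r)).const_mul a).cexp.differentiableAt

lemma dP1 (k : ℂ) (r : ℝ) :
    deriv (fun t : ℝ => Complex.exp (Complex.I * k * t)) r
      = Complex.I * k * Complex.exp (Complex.I * k * r) := dexp (Complex.I * k) r

lemma dP2 (c k : ℂ) (r : ℝ) :
    deriv (fun t : ℝ => c * Complex.exp (Complex.I * k * t)) r
      = c * (Complex.I * k * Complex.exp (Complex.I * k * r)) := dexpc c (Complex.I * k) r

lemma dM1 (k : ℂ) (r : ℝ) :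
    deriv (fun t : ℝ => Complex.exp (-(Complex.I * k * t))) r
      = -(Complex.I * k) * Complex.exp (-(Complex.I * k * r)) := by
  simpa [neg_mul] using dexp (-(Complex.I * k)) r

lemma dM2 (c k : ℂ) (r : ℝ) :
    deriv (fun t : ℝ => c * Complex.exp (-(Complex.I * k * t))) r
      = c * (-(Complex.I * k) * Complex.exp (-(Complex.I * k * r))) := by
  simpa [neg_mul] using dexpc c (-(Complex.I * k)) r

lemma hE (k : ℂ) (r : ℝ) :
    Complex.exp (Complex.I * k * r) * Complex.exp (-(Complex.I * k * r)) = 1 := by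
  rw [← Complex.exp_add]; simp

/-- **Wronskians of the model Weyl–Titchmarsh solutions.** -/
theorem model_wronskians (z k₁ k₂ : ℂ) (hz : z ≠ 0)
    (h1 : Pquart k₁ z = 0) (h2 : Pquart k₂ z = 0) (hk : k₁ ^ 2 ≠ k₂ ^ 2) :
    ∀ r : ℝ,
      Wr (PsiP k₁ (cCoef k₁ z)) (PsiM k₂ (cCoef k₂ z)) r = 0 ∧
      Wr (PsiP k₂ (cCoef k₂ z)) (PsiM k₁ (cCoef k₁ z)) r = 0 ∧
      Wr (PsiP k₁ (cCoef k₁ z)) (PsiM k₁ (cCoef k₁ z)) r =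
        -2 * Complex.I * k₁ * (1 - cCoef k₁ z ^ 2) ∧
      Wr (PsiP k₂ (cCoef k₂ z)) (PsiM k₂ (cCoef k₂ z)) r =
        -2 * Complex.I * k₂ * (1 - cCoef k₂ z ^ 2) := by
  unfold Pquart at h1 h2
  have hsum : k₁ ^ 2 + k₂ ^ 2 = -9/2 := by
    have hfac : (k₁ ^ 2 - k₂ ^ 2) * ((k₁ ^ 2 + k₂ ^ 2)/4 + 9/8) = 0 := by
      linear_combination h1 - h2
    rcases mul_eq_zero.mp hfac with h | h
    · exact absurd (sub_eq_zero.mp h) hk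
    · linear_combination 4 * h
  have hprod : ((1/2) * k₁ ^ 2 + 17/8) * ((1/2) * k₂ ^ 2 + 17/8) = -z ^ 2 := by
    linear_combination (-1) * h1 + (k₁ ^ 2/4 + 17/16) * hsum
  have hc : cCoef k₁ z * cCoef k₂ z = 1 := by
    unfold cCoef
    rw [div_mul_div_comm, div_eq_one_iff_eq (mul_ne_zero hz hz)]
    linear_combination (((1/2) * k₁ ^ 2 + 17/8) * ((1/2) * k₂ ^ 2 + 17/8)) * Complex.I_sq - hprod
  intro r
  set c₁ := cCoef k₁ z
  set c₂ := cCoef k₂ z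
  refine ⟨?_, ?_, ?_, ?_⟩
  · simp only [Wr, PsiP, PsiM, dP1, dP2, dM1, dM2]
    linear_combination (Complex.I * (k₁ + k₂) * Complex.exp (Complex.I * k₁ * r) *
      Complex.exp (-(Complex.I * k₂ * r))) * hc
  · simp only [Wr, PsiP, PsiM, dP1, dP2, dM1, dM2]
    linear_combination (Complex.I * (k₁ + k₂) * Complex.exp (Complex.I * k₂ * r) *
      Complex.exp (-(Complex.I * k₁ * r))) * hc
  · simp only [Wr, PsiP, PsiM, dP1, dP2, dM1, dM2]
    linear_combination (-2 * Complex.I * k₁ * (1 - c₁ ^ 2)) * hE k₁ r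
  · simp only [Wr, PsiP, PsiM, dP1, dP2, dM1, dM2]
    linear_combination (-2 * Complex.I * k₂ * (1 - c₂ ^ 2)) * hE k₂ r
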